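/- (Semigroup property of the generalized Mehler kernel) For every d ∈ {1,2,3}, every κ > 0, every γ > 0, every δ > 0, all t > 0 and 0 < u < t, and all x, y ∈ ℝ^d, one has ∫_{ℝ^d} G_κ^{(d)}(x,z;δ(t−u),γ) · G_κ^{(d)}(z,y;δu,γ) dz = γ^{d/2} · G_κ^{(d)}(x,y;δt,γ). -/

import Mathlib

open Real MeasureTheory

/-- The generalized d-dimensional Mehler kernel `G_κ^{(d)}(x,y;t,γ)`.
Here `cosh/sinh` plays the role of `coth`. -/
noncomputable def mehlerG (d : ℕ) (κ t γ : ℝ) (x y : Fin d → ℝ) : ℝ :=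
  (κ / (2 * Real.pi * Real.sinh (κ * t))) ^ ((d : ℝ) / 2) *
    ∏ j, Real.exp (-(κ / (4 * γ)) * ((x j + y j) ^ 2 * Real.tanh (κ * t / 2) +
      (x j - y j) ^ 2 * (Real.cosh (κ * t / 2) / Real.sinh (κ * t / 2))))

/-- One-dimensional Mehler kernel in `coth` form, with `p = κ t`. -/
noncomputable def mehlerg1 (κ γ p x y : ℝ) : ℝ :=
  Real.sqrt (κ / (2 * Real.pi * Real.sinh p)) *
    Real.exp (-(κ / (2 * γ)) * ((Real.cosh p * (x ^ 2 + y ^ 2) - 2 * x * y) / Real.sinh p))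

lemma gauss_quad (A B C : ℝ) (hA : 0 < A) :
    ∫ z : ℝ, Real.exp (-A * z ^ 2 + B * z + C)
      = Real.sqrt (Real.pi / A) * Real.exp (C + B ^ 2 / (4 * A)) := by
  have hA' : A ≠ 0 := ne_of_gt hA
  have key : ∀ z : ℝ, Real.exp (-A * z ^ 2 + B * z + C)
      = Real.exp (C + B ^ 2 / (4 * A)) * Real.exp (-A * (z - B / (2 * A)) ^ 2) := by
    intro z
    rw [← Real.exp_add]
    congr 1
    field_simp
    ring
  simp_rw [key]
  rw [MeasureTheory.integral_const_mul,
    MeasureTheory.integral_sub_right_eq_self (fun z => Real.exp (-A * z ^ 2)) (B / (2 * A)),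
    integral_gaussian]
  ring

/-- Half-angle rewriting of the Mehler exponent. -/
lemma mehler_exponent_eq (p x y : ℝ) (hp : 0 < p) :
    (x + y) ^ 2 * Real.tanh (p / 2) + (x - y) ^ 2 * (Real.cosh (p / 2) / Real.sinh (p / 2))
      = 2 * ((Real.cosh p * (x ^ 2 + y ^ 2) - 2 * x * y) / Real.sinh p) := by
  have hs : 0 < Real.sinh (p / 2) := Real.sinh_pos_iff.2 (by linarith)
  have hc : 0 < Real.cosh (p / 2) := Real.cosh_pos _
  have h2 : (2 : ℝ) * (p / 2) = p := by ring
  have hsinh : Real.sinh p = 2 * Real.sinh (p / 2) * Real.cosh (p / 2) := by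
    have := Real.sinh_two_mul (p / 2); rwa [h2] at this
  have hcosh : Real.cosh p = Real.cosh (p / 2) ^ 2 + Real.sinh (p / 2) ^ 2 := by
    have := Real.cosh_two_mul (p / 2); rwa [h2] at this
  have hpy : Real.cosh (p / 2) ^ 2 - Real.sinh (p / 2) ^ 2 = 1 :=
    Real.cosh_sq_sub_sinh_sq _
  rw [Real.tanh_eq_sinh_div_cosh, hsinh, hcosh]
  field_simp
  linear_combination (-2 * x * y) * hpy

/-- The 1D semigroup property. -/
lemma mehlerg1_semigroup (κ γ a b x y : ℝ) (hκ : 0 < κ) (hγ : 0 < γ)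
    (ha : 0 < a) (hb : 0 < b) :
    ∫ z : ℝ, mehlerg1 κ γ a x z * mehlerg1 κ γ b z y
      = Real.sqrt γ * mehlerg1 κ γ (a + b) x y := by
  have hsa : 0 < Real.sinh a := Real.sinh_pos_iff.2 ha
  have hsb : 0 < Real.sinh b := Real.sinh_pos_iff.2 hb
  have hsc : 0 < Real.sinh (a + b) := Real.sinh_pos_iff.2 (by linarith)
  set sa := Real.sinh a with hsa_def
  set sb := Real.sinh b with hsb_def
  set ca := Real.cosh a with hca_def
  set cb := Real.cosh b with hcb_def
  set sc := Real.sinh (a + b) with hsc_def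
  set cc := Real.cosh (a + b) with hcc_def
  have hscab : sc = sa * cb + ca * sb := Real.sinh_add a b
  have hccab : cc = ca * cb + sa * sb := Real.cosh_add a b
  have hpa : ca ^ 2 - sa ^ 2 = 1 := Real.cosh_sq_sub_sinh_sq a
  have hpb : cb ^ 2 - sb ^ 2 = 1 := Real.cosh_sq_sub_sinh_sq b
  set A : ℝ := κ * sc / (2 * γ * sa * sb) with hA_def
  set B : ℝ := κ / γ * (x / sa + y / sb) with hB_def
  set C : ℝ := -(κ / (2 * γ)) * (ca * x ^ 2 / sa + cb * y ^ 2 / sb) with hC_def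
  have hA : 0 < A := by
    rw [hA_def]; positivity
  have key : ∀ z : ℝ, mehlerg1 κ γ a x z * mehlerg1 κ γ b z y
      = (Real.sqrt (κ / (2 * Real.pi * sa)) * Real.sqrt (κ / (2 * Real.pi * sb))) *
        Real.exp (-A * z ^ 2 + B * z + C) := by
    intro z
    rw [mehlerg1, mehlerg1]
    rw [show Real.sqrt (κ / (2 * Real.pi * sa)) *
          Real.exp (-(κ / (2 * γ)) * ((ca * (x ^ 2 + z ^ 2) - 2 * x * z) / sa)) *
        (Real.sqrt (κ / (2 * Real.pi * sb)) *
          Real.exp (-(κ / (2 * γ)) * ((cb * (z ^ 2 + y ^ 2) - 2 * z * y) / sb)))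
      = (Real.sqrt (κ / (2 * Real.pi * sa)) * Real.sqrt (κ / (2 * Real.pi * sb))) *
        (Real.exp (-(κ / (2 * γ)) * ((ca * (x ^ 2 + z ^ 2) - 2 * x * z) / sa)) *
          Real.exp (-(κ / (2 * γ)) * ((cb * (z ^ 2 + y ^ 2) - 2 * z * y) / sb))) from by ring]
    rw [← Real.exp_add]
    congr 1
    rw [hA_def, hB_def, hC_def, hscab]
    field_simp
    ring
  simp_rw [key]
  rw [MeasureTheory.integral_const_mul, gauss_quad _ _ _ hA]
  -- Now pure algebra
  have hpref : Real.sqrt (κ / (2 * Real.pi * sa)) * Real.sqrt (κ / (2 * Real.pi * sb)) *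
      Real.sqrt (Real.pi / A) = Real.sqrt γ * Real.sqrt (κ / (2 * Real.pi * sc)) := by
    rw [← Real.sqrt_mul (by positivity), ← Real.sqrt_mul (by positivity),
      ← Real.sqrt_mul hγ.le]
    congr 1
    rw [hA_def]
    field_simp
  have hkey : (x * sb + y * sa) ^ 2 - (ca * sb * x ^ 2 + cb * sa * y ^ 2) * sc
      = -(sa * sb * (cc * (x ^ 2 + y ^ 2) - 2 * x * y)) := by
    rw [hscab, hccab]
    linear_combination (-(sb ^ 2 * x ^ 2)) * hpa + (-(sa ^ 2 * y ^ 2)) * hpb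
  have hexp : C + B ^ 2 / (4 * A)
      = -(κ / (2 * γ)) * ((cc * (x ^ 2 + y ^ 2) - 2 * x * y) / sc) := by
    have h1 : C + B ^ 2 / (4 * A)
        = (κ / (2 * γ)) * (((x * sb + y * sa) ^ 2
            - (ca * sb * x ^ 2 + cb * sa * y ^ 2) * sc) / (sa * sb * sc)) := by
      rw [hA_def, hB_def, hC_def]
      field_simp
      ring
    rw [h1, hkey]
    field_simp
  rw [hexp, mehlerg1]
  calc Real.sqrt (κ / (2 * Real.pi * sa)) * Real.sqrt (κ / (2 * Real.pi * sb)) *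
        (Real.sqrt (Real.pi / A) *
          Real.exp (-(κ / (2 * γ)) * ((cc * (x ^ 2 + y ^ 2) - 2 * x * y) / sc)))
      = (Real.sqrt (κ / (2 * Real.pi * sa)) * Real.sqrt (κ / (2 * Real.pi * sb)) *
          Real.sqrt (Real.pi / A)) *
          Real.exp (-(κ / (2 * γ)) * ((cc * (x ^ 2 + y ^ 2) - 2 * x * y) / sc)) := by ring
    _ = _ := by rw [hpref]; ring

/-- The d-dimensional kernel is a product of 1D kernels. -/
lemma mehlerG_eq_prod (d : ℕ) (κ γ t : ℝ) (hκ : 0 < κ) (ht : 0 < t)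
    (x y : Fin d → ℝ) :
    mehlerG d κ t γ x y = ∏ j, mehlerg1 κ γ (κ * t) (x j) (y j) := by
  have hp : 0 < κ * t := mul_pos hκ ht
  have hsp : 0 < Real.sinh (κ * t) := Real.sinh_pos_iff.2 hp
  have hbase : (0 : ℝ) < κ / (2 * Real.pi * Real.sinh (κ * t)) := by positivity
  rw [mehlerG]
  have h1 : (κ / (2 * Real.pi * Real.sinh (κ * t))) ^ ((d : ℝ) / 2)
      = Real.sqrt (κ / (2 * Real.pi * Real.sinh (κ * t))) ^ d := by
    rw [Real.sqrt_eq_rpow, ← Real.rpow_natCast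
      ((κ / (2 * Real.pi * Real.sinh (κ * t))) ^ ((1 : ℝ) / 2)) d,
      ← Real.rpow_mul hbase.le]
    congr 1
    ring
  have h2 : ∀ j : Fin d,
      Real.exp (-(κ / (4 * γ)) * ((x j + y j) ^ 2 * Real.tanh (κ * t / 2) +
        (x j - y j) ^ 2 * (Real.cosh (κ * t / 2) / Real.sinh (κ * t / 2))))
      = Real.exp (-(κ / (2 * γ)) *
          ((Real.cosh (κ * t) * (x j ^ 2 + y j ^ 2) - 2 * x j * y j) / Real.sinh (κ * t))) := by
    intro j
    rw [mehler_exponent_eq (κ * t) (x j) (y j) hp]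
    congr 1
    ring
  simp_rw [h1, h2, mehlerg1]
  rw [Finset.prod_mul_distrib, Finset.prod_const, Finset.card_univ, Fintype.card_fin]

/-- Semigroup property of the generalized Mehler kernel. -/
theorem mehlerG_semigroup (d : ℕ) (hd : d = 1 ∨ d = 2 ∨ d = 3) (κ γ δ t u : ℝ)
    (hκ : 0 < κ) (hγ : 0 < γ) (hδ : 0 < δ) (hu : 0 < u) (hut : u < t)
    (x y : Fin d → ℝ) :
    ∫ z : Fin d → ℝ, mehlerG d κ (δ * (t - u)) γ x z * mehlerG d κ (δ * u) γ z y =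
      γ ^ ((d : ℝ) / 2) * mehlerG d κ (δ * t) γ x y := by
  have h1 : (0 : ℝ) < δ * (t - u) := by nlinarith
  have h2 : (0 : ℝ) < δ * u := by positivity
  have h3 : (0 : ℝ) < δ * t := by nlinarith
  have hsum : κ * (δ * (t - u)) + κ * (δ * u) = κ * (δ * t) := by ring
  have step1 : ∀ z : Fin d → ℝ,
      mehlerG d κ (δ * (t - u)) γ x z * mehlerG d κ (δ * u) γ z y
      = ∏ j, (mehlerg1 κ γ (κ * (δ * (t - u))) (x j) (z j) *
          mehlerg1 κ γ (κ * (δ * u)) (z j) (y j)) := by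
    intro z
    rw [mehlerG_eq_prod d κ γ _ hκ h1, mehlerG_eq_prod d κ γ _ hκ h2,
      ← Finset.prod_mul_distrib]
  simp_rw [step1]
  rw [MeasureTheory.volume_pi, MeasureTheory.integral_fintype_prod_eq_prod (ι := Fin d)
    (f := fun j w => mehlerg1 κ γ (κ * (δ * (t - u))) (x j) w *
      mehlerg1 κ γ (κ * (δ * u)) w (y j))]
  have step2 : ∀ j : Fin d,
      (∫ w : ℝ, mehlerg1 κ γ (κ * (δ * (t - u))) (x j) w *
        mehlerg1 κ γ (κ * (δ * u)) w (y j))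
      = Real.sqrt γ * mehlerg1 κ γ (κ * (δ * t)) (x j) (y j) := by
    intro j
    rw [mehlerg1_semigroup κ γ _ _ (x j) (y j) hκ hγ (by positivity) (by positivity), hsum]
  simp_rw [step2]
  rw [Finset.prod_mul_distrib, Finset.prod_const, Finset.card_univ, Fintype.card_fin,
    mehlerG_eq_prod d κ γ _ hκ h3]
  congr 1
  rw [Real.sqrt_eq_rpow, ← Real.rpow_natCast (γ ^ ((1 : ℝ) / 2)) d, ← Real.rpow_mul hγ.le]
  congr 1
  ring
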